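/- Let m ≥ 1, λ_1,...,λ_m positive reals, and consider the m+1 dehomogenized polynomials f_i(y) = y^{i-1}(1 − λ_i y), 1 ≤ i ≤ m, and g(y) = ∏_{i=1}^m (y + λ_i), all of degree ≤ m. The determinant of their coefficient matrix (in the monomial basis 1, y, ..., y^m) is, up to sign, 1 + ∑_{k=1}^m (λ_{m-k+1}⋯λ_m) E_k, hence nonzero; consequently f_1,...,f_m, g form a basis of the space of polynomials of degree ≤ m. -/

import Mathlib

open Finset Polynomial

noncomputable def bidiag (n : ℕ) (lam : Fin n → ℝ) (c : Fin (n + 1) → ℝ) :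
    Matrix (Fin (n + 1)) (Fin (n + 1)) ℝ :=
  Matrix.of fun i j =>
    if h : (i : ℕ) < n then
      (if (j : ℕ) = (i : ℕ) then 1 else if (j : ℕ) = (i : ℕ) + 1 then -lam ⟨i, h⟩ else 0)
    else c j

lemma prodTail (n : ℕ) (lam : Fin (n + 1) → ℝ) (t : ℕ) :
    ∏ i ∈ Finset.univ.filter (fun i : Fin (n + 1) => t + 1 ≤ (i : ℕ)), lam i
      = ∏ i ∈ Finset.univ.filter (fun i : Fin n => t ≤ (i : ℕ)), lam i.succ := by
  rw [Finset.prod_filter, Finset.prod_filter, Fin.prod_univ_succ]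
  simp [Nat.succ_le_succ_iff]

lemma bidiag_det : ∀ (n : ℕ) (lam : Fin n → ℝ) (c : Fin (n + 1) → ℝ),
    (bidiag n lam c).det
      = ∑ j : Fin (n + 1), c j *
          ∏ i ∈ Finset.univ.filter (fun i : Fin n => (j : ℕ) ≤ (i : ℕ)), lam i := by
  intro n
  induction n with
  | zero =>
      intro lam c
      rw [Matrix.det_fin_one]
      simp [bidiag]
  | succ n ih =>
      intro lam c
      rw [Matrix.det_succ_column_zero, Fin.sum_univ_succ]
      have h0 : (bidiag (n+1) lam c) 0 0 = 1 := by simp [bidiag]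
      have hsub0 : (bidiag (n+1) lam c).submatrix (Fin.succAbove 0) Fin.succ
          = bidiag n (fun i => lam i.succ) (fun j => c j.succ) := by
        ext i j
        simp only [Matrix.submatrix_apply, Fin.succAbove_zero, bidiag, Matrix.of_apply,
          Fin.val_succ]
        by_cases h : (i : ℕ) < n
        · rw [dif_pos (by omega), dif_pos h]
          by_cases h1 : (j : ℕ) = (i : ℕ)
          · rw [if_pos (by omega), if_pos h1]
          · rw [if_neg (by omega), if_neg h1]
            by_cases h2 : (j : ℕ) = (i : ℕ) + 1
            · rw [if_pos (by omega), if_pos h2]; rfl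
            · rw [if_neg (by omega), if_neg h2]
        · rw [dif_neg (by omega), dif_neg h]
      have htail : ∑ i : Fin (n + 1),
            (-1 : ℝ) ^ ((i.succ : Fin (n+2)) : ℕ) * (bidiag (n+1) lam c) i.succ 0 *
              ((bidiag (n+1) lam c).submatrix (Fin.succAbove i.succ) Fin.succ).det
          = c 0 * ∏ i : Fin (n+1), lam i := by
        rw [Finset.sum_eq_single (Fin.last n)]
        · have hlast : ((Fin.last n).succ : Fin (n+2)) = Fin.last (n+1) := by
            ext; simp
          rw [hlast]
          have hb : (bidiag (n+1) lam c) (Fin.last (n+1)) 0 = c 0 := by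
            simp [bidiag]
          rw [hb]
          have hsubl : ((bidiag (n+1) lam c).submatrix (Fin.succAbove (Fin.last (n+1))) Fin.succ)
              = Matrix.of (fun i j : Fin (n+1) =>
                  if (j : ℕ) + 1 = (i : ℕ) then 1 else if (j : ℕ) = (i : ℕ) then -lam i else 0) := by
            ext i j
            simp only [Matrix.submatrix_apply, Fin.succAbove_last, bidiag, Matrix.of_apply,
              Fin.coe_castSucc, Fin.val_succ]
            rw [dif_pos (i.isLt)]
            by_cases h1 : (j : ℕ) + 1 = (i : ℕ)
            · rw [if_pos h1, if_pos h1]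
            · rw [if_neg h1, if_neg h1]
              by_cases h2 : (j : ℕ) = (i : ℕ)
              · rw [if_pos (by omega), if_pos h2]
              · rw [if_neg (by omega), if_neg h2]
          rw [hsubl]
          have hdet : (Matrix.of (fun i j : Fin (n+1) =>
              if (j : ℕ) + 1 = (i : ℕ) then 1 else if (j : ℕ) = (i : ℕ) then -lam i else 0)).det
              = ∏ i : Fin (n+1), (-lam i) := by
            rw [Matrix.det_of_lowerTriangular]
            · apply Finset.prod_congr rfl
              intro i _
              simp
            · intro i j hij
              have : (i : ℕ) < (j : ℕ) := hij
              simp only [Matrix.of_apply]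
              rw [if_neg (by omega), if_neg (by omega)]
          rw [hdet]
          have hneg : ∏ i : Fin (n+1), -lam i = (-1:ℝ)^(n+1) * ∏ i : Fin (n+1), lam i := by
            have : (fun i : Fin (n+1) => -lam i) = fun i => (-1:ℝ) * lam i := by
              funext i; ring
            rw [this, Finset.prod_mul_distrib, Finset.prod_const, Finset.card_univ,
              Fintype.card_fin]
          have hsq : ((-1:ℝ) ^ (n+1)) * ((-1:ℝ) ^ (n+1)) = 1 := by
            rw [← pow_add, ← two_mul, pow_mul]; norm_num
          rw [hneg, Fin.val_last]
          calc (-1:ℝ)^(n+1) * c 0 * ((-1:ℝ)^(n+1) * ∏ i : Fin (n+1), lam i)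
              = ((-1:ℝ)^(n+1) * (-1:ℝ)^(n+1)) * (c 0 * ∏ i : Fin (n+1), lam i) := by ring
            _ = c 0 * ∏ i : Fin (n+1), lam i := by rw [hsq, one_mul]
        · intro i _ hne
          have hlt : (i : ℕ) < n := by
            rcases lt_or_eq_of_le (Nat.lt_succ_iff.mp i.isLt) with h | h
            · exact h
            · exact absurd (Fin.ext h : i = Fin.last n) hne
          have hb : (bidiag (n+1) lam c) i.succ 0 = 0 := by
            simp only [bidiag, Matrix.of_apply, Fin.val_succ, Fin.val_zero]
            rw [dif_pos (by omega)]; simp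
          rw [hb]; ring
        · simp
      have hRHS : ∑ j : Fin (n+2), c j *
            ∏ i ∈ Finset.univ.filter (fun i : Fin (n+1) => (j : ℕ) ≤ (i : ℕ)), lam i
          = c 0 * ∏ i : Fin (n+1), lam i
            + ∑ j : Fin (n+1), c j.succ *
                ∏ i ∈ Finset.univ.filter (fun i : Fin n => (j : ℕ) ≤ (i : ℕ)), lam i.succ := by
        rw [Fin.sum_univ_succ]
        congr 1
        · congr 1
          apply Finset.prod_congr _ (fun _ _ => rfl)
          ext i; simp
        · apply Finset.sum_congr rfl
          intro j _
          simp only [Fin.val_succ]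
          rw [prodTail]
      rw [hRHS, htail, h0, hsub0, ih]
      simp only [Fin.val_zero, pow_zero, one_mul]
      ring

/-- The `k`-th elementary symmetric function of `l 0, ..., l (m-1)`. -/
def esymmVal (m : ℕ) (l : Fin m → ℝ) (k : ℕ) : ℝ :=
  ∑ s ∈ Finset.powersetCard k (Finset.univ : Finset (Fin m)), ∏ i ∈ s, l i

/-- The product of the top `k` values `l (m-k) ⋯ l (m-1)`. -/
def topProd (m : ℕ) (l : Fin m → ℝ) (k : ℕ) : ℝ :=
  ∏ i ∈ Finset.univ.filter (fun i : Fin m => m - k ≤ (i : ℕ)), l i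

/-- The family `f_1, …, f_m, g` of dehomogenized polynomials:
`f_i = y^{i-1} (1 - λ_i y)` and `g = ∏ (y + λ_i)`. -/
noncomputable def fam (m : ℕ) (l : Fin m → ℝ) : Fin (m + 1) → Polynomial ℝ :=
  fun i =>
    if h : (i : ℕ) < m then X ^ (i : ℕ) * (1 - C (l ⟨i, h⟩) * X)
    else ∏ j : Fin m, (X + C (l j))

lemma coeff_f (a : ℕ) (r : ℝ) (j : ℕ) :
    (X ^ a * (1 - C r * X) : ℝ[X]).coeff j
      = if j = a then 1 else if j = a + 1 then -r else 0 := by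
  have h : (X ^ a * (1 - C r * X) : ℝ[X]) = X ^ a - C r * X ^ (a + 1) := by ring
  rw [h, Polynomial.coeff_sub, Polynomial.coeff_C_mul, Polynomial.coeff_X_pow,
    Polynomial.coeff_X_pow]
  by_cases h1 : j = a
  · rw [if_pos h1, if_pos h1, if_neg (by omega)]; ring
  · rw [if_neg h1, if_neg h1]
    by_cases h2 : j = a + 1
    · rw [if_pos h2, if_pos h2]; ring
    · rw [if_neg h2, if_neg h2]; ring

lemma famMatrix_eq (m : ℕ) (l : Fin m → ℝ) :
    (Matrix.of fun i j : Fin (m + 1) => (fam m l i).coeff (j : ℕ))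
      = bidiag m l (fun j => (∏ i : Fin m, (X + C (l i))).coeff (j : ℕ)) := by
  ext i j
  simp only [Matrix.of_apply, fam, bidiag]
  by_cases h : (i : ℕ) < m
  · rw [dif_pos h, dif_pos h, coeff_f]
  · rw [dif_neg h, dif_neg h]

lemma coeff_g (m : ℕ) (l : Fin m → ℝ) (j : Fin (m + 1)) :
    (∏ i : Fin m, (X + C (l i))).coeff (j : ℕ) = esymmVal m l (m - (j : ℕ)) := by
  rw [Finset.prod_X_add_C_coeff (Finset.univ : Finset (Fin m)) l
    (by simp [Nat.lt_succ_iff.mp j.isLt])]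
  simp [esymmVal]

lemma topProd_eq (m : ℕ) (l : Fin m → ℝ) (j : Fin (m + 1)) :
    (∏ i ∈ Finset.univ.filter (fun i : Fin m => (j : ℕ) ≤ (i : ℕ)), l i)
      = topProd m l (m - (j : ℕ)) := by
  unfold topProd
  apply Finset.prod_congr _ (fun _ _ => rfl)
  apply Finset.filter_congr
  intro i _
  have := Nat.lt_succ_iff.mp j.isLt
  constructor <;> intro h <;> simp_all <;> omega

lemma det_eq (m : ℕ) (l : Fin m → ℝ) :
    (Matrix.of fun i j : Fin (m + 1) => (fam m l i).coeff (j : ℕ)).det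
      = ∑ k ∈ Finset.range (m + 1), topProd m l k * esymmVal m l k := by
  rw [famMatrix_eq, bidiag_det]
  have h1 : ∀ j : Fin (m + 1),
      (∏ i : Fin m, (X + C (l i))).coeff (j : ℕ) *
          ∏ i ∈ Finset.univ.filter (fun i : Fin m => (j : ℕ) ≤ (i : ℕ)), l i
        = topProd m l (m - (j : ℕ)) * esymmVal m l (m - (j : ℕ)) := by
    intro j
    rw [coeff_g, topProd_eq]; ring
  rw [Finset.sum_congr rfl (fun j _ => h1 j)]
  rw [Fin.sum_univ_eq_sum_range (fun j => topProd m l (m - j) * esymmVal m l (m - j))]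
  rw [← Finset.sum_range_reflect (fun k => topProd m l k * esymmVal m l k) (m + 1)]
  apply Finset.sum_congr rfl
  intro j hj
  simp only [Nat.add_sub_cancel]

theorem stmt19 (m : ℕ) (hm : 1 ≤ m) (l : Fin m → ℝ) (hl : ∀ i, 0 < l i) :
    -- the coefficient matrix of the family `fam m l` in the basis `1, y, …, y^m`
    ((Matrix.of fun i j : Fin (m + 1) => (fam m l i).coeff (j : ℕ)).det
          = 1 + ∑ k ∈ Finset.Icc 1 m, topProd m l k * esymmVal m l k ∨
        (Matrix.of fun i j : Fin (m + 1) => (fam m l i).coeff (j : ℕ)).det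
          = -(1 + ∑ k ∈ Finset.Icc 1 m, topProd m l k * esymmVal m l k)) ∧
      (Matrix.of fun i j : Fin (m + 1) => (fam m l i).coeff (j : ℕ)).det ≠ 0 ∧
      LinearIndependent ℝ (fam m l) ∧
      Submodule.span ℝ (Set.range (fam m l)) = Polynomial.degreeLE ℝ (m : ℕ) := by
  have hrange : Finset.range (m + 1) = insert 0 (Finset.Icc 1 m) := by
    ext x; simp [Nat.lt_succ_iff]; omega
  have hF0 : topProd m l 0 * esymmVal m l 0 = 1 := by
    have h1 : topProd m l 0 = 1 := by
      unfold topProd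
      have he : Finset.univ.filter (fun i : Fin m => m - 0 ≤ (i : ℕ)) = ∅ := by
        ext i
        simp only [Finset.mem_filter, Finset.mem_univ, true_and, Finset.notMem_empty,
          iff_false, Nat.sub_zero]
        exact Nat.not_le.mpr i.isLt
      rw [he, Finset.prod_empty]
    have h2 : esymmVal m l 0 = 1 := by
      unfold esymmVal
      rw [Finset.powersetCard_zero, Finset.sum_singleton, Finset.prod_empty]
    rw [h1, h2, mul_one]
  have hdet : (Matrix.of fun i j : Fin (m + 1) => (fam m l i).coeff (j : ℕ)).det
      = 1 + ∑ k ∈ Finset.Icc 1 m, topProd m l k * esymmVal m l k := by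
    rw [det_eq, hrange, Finset.sum_insert (by simp), hF0]
  have hnn : 0 ≤ ∑ k ∈ Finset.Icc 1 m, topProd m l k * esymmVal m l k := by
    apply Finset.sum_nonneg
    intro k _
    apply mul_nonneg
    · exact Finset.prod_nonneg fun i _ => (hl i).le
    · exact Finset.sum_nonneg fun s _ => Finset.prod_nonneg fun i _ => (hl i).le
  have hne : (Matrix.of fun i j : Fin (m + 1) => (fam m l i).coeff (j : ℕ)).det ≠ 0 := by
    rw [hdet]; positivity
  have hA : IsUnit (Matrix.of fun i j : Fin (m + 1) => (fam m l i).coeff (j : ℕ)) :=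
    (Matrix.isUnit_iff_isUnit_det _).mpr (isUnit_iff_ne_zero.mpr hne)
  have hrows : LinearIndependent ℝ
      (fun i => (Matrix.of fun i j : Fin (m + 1) => (fam m l i).coeff (j : ℕ)) i) :=
    Matrix.linearIndependent_rows_iff_isUnit.mpr hA
  have hli : LinearIndependent ℝ (fam m l) := by
    apply LinearIndependent.of_comp (LinearMap.pi (fun j : Fin (m + 1) => lcoeff ℝ (j : ℕ)))
    exact hrows
  refine ⟨Or.inl hdet, hne, hli, ?_⟩
  -- span
  have hmem : ∀ i, fam m l i ∈ Polynomial.degreeLE ℝ (m : ℕ) := by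
    intro i
    rw [Polynomial.mem_degreeLE]
    unfold fam
    by_cases h : (i : ℕ) < m
    · rw [dif_pos h]
      have he : (X ^ (i : ℕ) * (1 - C (l ⟨i, h⟩) * X) : ℝ[X])
          = X ^ (i : ℕ) - C (l ⟨i, h⟩) * X ^ ((i : ℕ) + 1) := by ring
      rw [he]
      refine (Polynomial.degree_sub_le _ _).trans (max_le ?_ ?_)
      · exact (Polynomial.degree_X_pow_le _).trans (by exact_mod_cast Nat.cast_le.mpr h.le)
      · exact (Polynomial.degree_C_mul_X_pow_le _ _).trans (by exact_mod_cast Nat.cast_le.mpr h)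
    · rw [dif_neg h]
      refine (Polynomial.degree_prod_le _ _).trans ?_
      have : ∀ j : Fin m, (X + C (l j)).degree = 1 := fun j => Polynomial.degree_X_add_C _
      rw [Finset.sum_congr rfl (fun j _ => this j)]
      simp
  set p : Submodule ℝ ℝ[X] := Polynomial.degreeLE ℝ (m : ℕ) with hp
  let v : Fin (m + 1) → p := fun i => ⟨fam m l i, hmem i⟩
  have hvli : LinearIndependent ℝ v := by
    apply LinearIndependent.of_comp p.subtype
    exact hli
  have hfin : FiniteDimensional ℝ p := by
    rw [hp, ← Polynomial.degreeLT_succ_eq_degreeLE]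
    exact Module.Finite.equiv (Polynomial.degreeLTEquiv ℝ (m + 1)).symm
  have hcard : Fintype.card (Fin (m + 1)) = Module.finrank ℝ p := by
    rw [hp, ← Polynomial.degreeLT_succ_eq_degreeLE]
    rw [LinearEquiv.finrank_eq (Polynomial.degreeLTEquiv ℝ (m + 1))]
    simp
  have hsp : Submodule.span ℝ (Set.range v) = ⊤ :=
    hvli.span_eq_top_of_card_eq_finrank hcard
  have : Submodule.span ℝ (Set.range (fam m l)) = Submodule.map p.subtype
      (Submodule.span ℝ (Set.range v)) := by
    rw [Submodule.map_span]
    congr 1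
    rw [← Set.range_comp]
    rfl
  rw [this, hsp, Submodule.map_top, Submodule.range_subtype]
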